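/- Let ε ≥ 0, let 0 = a_1 < … < a_m = n−1 be a 2ε-greedy sequence, and let 0 = b_1 < … < b_k = n−1 be any ε-feasible sequence. Then m ≤ k. (Theorem 1, size guarantee for a single monotone subcloud: the greedy polygonal path with error 2ε has at most as many vertices as any polygonal path ε-approximating the cloud.) -/

import Mathlib

/-- The projection value `t s = ⟪p s, u⟫` of the cloud point `p s` onto the direction `u`. -/
noncomputable def projVal {d n : ℕ} (p : Fin n → EuclideanSpace ℝ (Fin d))
    (u : EuclideanSpace ℝ (Fin d)) (s : Fin n) : ℝ :=
  inner ℝ (p s) u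

/-- The point `q(s,i,j)` of the straight segment `[p i, p j]` whose projection
onto `u` equals `t s`. -/
noncomputable def segPoint {d n : ℕ} (p : Fin n → EuclideanSpace ℝ (Fin d))
    (u : EuclideanSpace ℝ (Fin d)) (s i j : Fin n) : EuclideanSpace ℝ (Fin d) :=
  p i + ((projVal p u s - projVal p u i) / (projVal p u j - projVal p u i)) • (p j - p i)

/-- The orthogonal distance `dOrth(s,i,j)` from `p s` to the segment `[p i, p j]`,
measured orthogonally to `u`. -/
noncomputable def dOrth {d n : ℕ} (p : Fin n → EuclideanSpace ℝ (Fin d))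
    (u : EuclideanSpace ℝ (Fin d)) (s i j : Fin n) : ℝ :=
  dist (p s) (segPoint p u s i j)

/-- The orthogonal distance `D(i,j)` from the segment `[p i, p j]` to the cloud:
the maximum of `dOrth(s,i,j)` over `i ≤ s ≤ j` (endpoints contribute `0`). -/
noncomputable def segCloudDist {d n : ℕ} (p : Fin n → EuclideanSpace ℝ (Fin d))
    (u : EuclideanSpace ℝ (Fin d)) (i j : Fin n) : ℝ :=
  (insert (0 : ℝ) ((Finset.Icc i j).image fun s => dOrth p u s i j)).max'
    (Finset.insert_nonempty _ _)

lemma segCloudDist_le {d n : ℕ} {p : Fin n → EuclideanSpace ℝ (Fin d)}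
    {u : EuclideanSpace ℝ (Fin d)} {i j : Fin n} {c : ℝ} (hc : 0 ≤ c)
    (h : ∀ s ∈ Finset.Icc i j, dOrth p u s i j ≤ c) :
    segCloudDist p u i j ≤ c := by
  apply Finset.max'_le
  intro y hy
  rcases Finset.mem_insert.1 hy with rfl | hy
  · exact hc
  · obtain ⟨s, hs, rfl⟩ := Finset.mem_image.1 hy
    exact h s hs

lemma le_segCloudDist {d n : ℕ} {p : Fin n → EuclideanSpace ℝ (Fin d)}
    {u : EuclideanSpace ℝ (Fin d)} {i j s : Fin n} (hs : s ∈ Finset.Icc i j) :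
    dOrth p u s i j ≤ segCloudDist p u i j := by
  apply Finset.le_max'
  exact Finset.mem_insert_of_mem (Finset.mem_image_of_mem _ hs)

lemma key_lemma {d n : ℕ} {p : Fin n → EuclideanSpace ℝ (Fin d)}
    {u : EuclideanSpace ℝ (Fin d)} (hmono : StrictMono (projVal p u))
    {ε : ℝ} (hε : 0 ≤ ε) {B B' i' j' : Fin n}
    (hBi : B ≤ i') (hij : i' < j') (hjB : j' ≤ B')
    (hfeas : segCloudDist p u B B' ≤ ε) :
    segCloudDist p u i' j' ≤ 2 * ε := by
  set t := projVal p u with ht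
  have hBB' : B < B' := lt_of_le_of_lt hBi (lt_of_lt_of_le hij hjB)
  have htB : t B < t B' := hmono hBB'
  have htij : t i' < t j' := hmono hij
  have hden : t B' - t B ≠ 0 := by linarith
  have hdenij : t j' - t i' ≠ 0 := by linarith
  apply segCloudDist_le (by linarith)
  intro s hs
  rw [Finset.mem_Icc] at hs
  obtain ⟨hs1, hs2⟩ := hs
  set lam := (t s - t i') / (t j' - t i') with hlam
  have hlam0 : 0 ≤ lam := div_nonneg (by
    have := hmono.monotone hs1; linarith) (by linarith)
  have hlam1 : lam ≤ 1 := by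
    rw [hlam, div_le_one (by linarith)]
    have := hmono.monotone hs2; linarith
  -- affinity of the big segment
  have hQ : segPoint p u s B B' =
      segPoint p u i' B B' + lam • (segPoint p u j' B B' - segPoint p u i' B B') := by
    have hcoef : (t i' - t B) / (t B' - t B)
        + lam * ((t j' - t B) / (t B' - t B) - (t i' - t B) / (t B' - t B))
        = (t s - t B) / (t B' - t B) := by
      rw [hlam]; field_simp; ring
    simp only [segPoint, ← ht]
    rw [← hcoef]
    module
  have hd1 : dist (p s) (segPoint p u s B B') ≤ ε :=
    le_trans (le_segCloudDist (Finset.mem_Icc.2 ⟨le_trans hBi hs1, le_trans hs2 hjB⟩)) hfeas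
  have hd2 : dist (p i') (segPoint p u i' B B') ≤ ε :=
    le_trans (le_segCloudDist (Finset.mem_Icc.2 ⟨hBi, le_trans (le_of_lt hij) hjB⟩)) hfeas
  have hd3 : dist (p j') (segPoint p u j' B B') ≤ ε :=
    le_trans (le_segCloudDist (Finset.mem_Icc.2 ⟨le_trans hBi (le_of_lt hij), hjB⟩)) hfeas
  have hdiff : segPoint p u s B B' - segPoint p u s i' j' =
      (1 - lam) • (segPoint p u i' B B' - p i')
      + lam • (segPoint p u j' B B' - p j') := by
    rw [hQ]
    simp only [segPoint, ← ht, ← hlam]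
    module
  have hb2 : dist (segPoint p u s B B') (segPoint p u s i' j') ≤ ε := by
    rw [dist_eq_norm, hdiff]
    calc ‖(1 - lam) • (segPoint p u i' B B' - p i')
          + lam • (segPoint p u j' B B' - p j')‖
        ≤ ‖(1 - lam) • (segPoint p u i' B B' - p i')‖
          + ‖lam • (segPoint p u j' B B' - p j')‖ := norm_add_le _ _
      _ ≤ (1 - lam) * ε + lam * ε := by
          gcongr ?_ + ?_
          · rw [norm_smul, Real.norm_eq_abs, abs_of_nonneg (by linarith)]
            have : ‖segPoint p u i' B B' - p i'‖ ≤ ε := by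
              rw [← norm_sub_rev, ← dist_eq_norm]; exact hd2
            nlinarith
          · rw [norm_smul, Real.norm_eq_abs, abs_of_nonneg hlam0]
            have : ‖segPoint p u j' B B' - p j'‖ ≤ ε := by
              rw [← norm_sub_rev, ← dist_eq_norm]; exact hd3
            nlinarith
      _ = ε := by ring
  calc dOrth p u s i' j' = dist (p s) (segPoint p u s i' j') := rfl
    _ ≤ dist (p s) (segPoint p u s B B') + dist (segPoint p u s B B') (segPoint p u s i' j') :=
        dist_triangle _ _ _
    _ ≤ ε + ε := add_le_add hd1 hb2
    _ = 2 * ε := by ring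

/-- An `ε`-greedy sequence `0 = a_1 < … < a_m = n-1` (here with `m + 1` vertices
`a 0, …, a (Fin.last m)`): (a) for every step and every `k` with `a_{i-1} < k ≤ a_i`,
`D(a_{i-1}, k) ≤ ε`; (b) for every step with `a_i < n - 1`, `D(a_{i-1}, a_i + 1) > ε`. -/
def IsGreedySeq {d n : ℕ} (p : Fin n → EuclideanSpace ℝ (Fin d))
    (u : EuclideanSpace ℝ (Fin d)) (ε : ℝ) {m : ℕ} (a : Fin (m + 1) → Fin n) : Prop :=
  StrictMono a ∧ (a 0 : ℕ) = 0 ∧ (a (Fin.last m) : ℕ) = n - 1 ∧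
  (∀ i : Fin m, ∀ k : Fin n, a i.castSucc < k → k ≤ a i.succ →
    segCloudDist p u (a i.castSucc) k ≤ ε) ∧
  (∀ i : Fin m, ∀ h : (a i.succ : ℕ) + 1 < n,
    ε < segCloudDist p u (a i.castSucc) ⟨(a i.succ : ℕ) + 1, h⟩)

/-- An `ε`-feasible sequence `0 = b_1 < … < b_k = n-1` (here with `k + 1` vertices):
`D(b_{i-1}, b_i) ≤ ε` for every step. -/
def IsFeasibleSeq {d n : ℕ} (p : Fin n → EuclideanSpace ℝ (Fin d))
    (u : EuclideanSpace ℝ (Fin d)) (ε : ℝ) {k : ℕ} (b : Fin (k + 1) → Fin n) : Prop :=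
  StrictMono b ∧ (b 0 : ℕ) = 0 ∧ (b (Fin.last k) : ℕ) = n - 1 ∧
  ∀ i : Fin k, segCloudDist p u (b i.castSucc) (b i.succ) ≤ ε

/-- Theorem 1, size guarantee for a single monotone subcloud: the greedy polygonal
path with error `2ε` has at most as many vertices (`m + 1 ≤ k + 1`) as any
polygonal path `ε`-approximating the cloud. -/
theorem greedy_size_guarantee {d n : ℕ} (hd : 1 ≤ d) (hn : 2 ≤ n)
    (p : Fin n → EuclideanSpace ℝ (Fin d)) (u : EuclideanSpace ℝ (Fin d))
    (hu : ‖u‖ = 1) (hmono : StrictMono (projVal p u))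
    (ε : ℝ) (hε : 0 ≤ ε) {m k : ℕ}
    (a : Fin (m + 1) → Fin n) (b : Fin (k + 1) → Fin n)
    (ha : IsGreedySeq p u (2 * ε) a) (hb : IsFeasibleSeq p u ε b) :
    m ≤ k := by
  by_contra hmk
  push_neg at hmk
  obtain ⟨amono, ha0, halast, hgA, hgB⟩ := ha
  obtain ⟨bmono, hb0, hblast, hfeas⟩ := hb
  have claim : ∀ i : ℕ, ∀ hik : i ≤ k,
      b ⟨i, by omega⟩ ≤ a ⟨i, by omega⟩ := by
    intro i
    induction i with
    | zero =>
      intro _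
      have h0 : (b (⟨0, by omega⟩ : Fin (k+1)) : ℕ) = 0 := by
        rw [show (⟨0, by omega⟩ : Fin (k+1)) = 0 from rfl]; exact hb0
      exact Fin.le_def.2 (by omega)
    | succ i IH =>
      intro hik'
      have IH' := IH (by omega)
      have hik : i + 1 ≤ k := hik'
      by_contra hlt
      push_neg at hlt
      have iFm : i < m := by omega
      have iFk : i < k := by omega
      have hcs : a (⟨i, iFm⟩ : Fin m).castSucc = a ⟨i, by omega⟩ := congrArg a rfl
      have hsu : a (⟨i, iFm⟩ : Fin m).succ = a ⟨i+1, by omega⟩ := congrArg a rfl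
      have hbcs : b (⟨i, iFk⟩ : Fin k).castSucc = b ⟨i, by omega⟩ := congrArg b rfl
      have hbsu : b (⟨i, iFk⟩ : Fin k).succ = b ⟨i+1, by omega⟩ := congrArg b rfl
      have hlt' : (a ⟨i+1, by omega⟩ : ℕ) < (b ⟨i+1, by omega⟩ : ℕ) := Fin.lt_def.1 hlt
      have hvsu : (a (⟨i, iFm⟩ : Fin m).succ : ℕ) = (a ⟨i+1, by omega⟩ : ℕ) :=
        congrArg Fin.val hsu
      have hvcs : (a (⟨i, iFm⟩ : Fin m).castSucc : ℕ) = (a ⟨i, by omega⟩ : ℕ) :=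
        congrArg Fin.val hcs
      have hn1 : (a (⟨i, iFm⟩ : Fin m).succ : ℕ) + 1 < n := by
        have h2 : (b (⟨i+1, by omega⟩ : Fin (k+1)) : ℕ) < n := (b _).isLt
        omega
      have hgreedy := hgB ⟨i, iFm⟩ hn1
      have hmonoa : (a (⟨i, iFm⟩ : Fin m).castSucc : ℕ) ≤ (a (⟨i, iFm⟩ : Fin m).succ : ℕ) :=
        Fin.le_def.1 (amono.monotone (Fin.castSucc_le_succ _))
      have hIb : b ⟨i, by omega⟩ ≤ a (⟨i, iFm⟩ : Fin m).castSucc := le_of_le_of_eq IH' hcs.symm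
      have hfi' : segCloudDist p u (b ⟨i, by omega⟩) (b ⟨i+1, by omega⟩) ≤ ε := hfeas ⟨i, iFk⟩
      have hkey : segCloudDist p u (a (⟨i, iFm⟩ : Fin m).castSucc)
          (⟨(a (⟨i, iFm⟩ : Fin m).succ : ℕ) + 1, hn1⟩ : Fin n) ≤ 2 * ε :=
        key_lemma hmono hε (B := b ⟨i, by omega⟩) (B' := b ⟨i+1, by omega⟩)
          hIb (Fin.lt_def.2 (lt_of_le_of_lt hmonoa (Nat.lt_succ_self _)))
          (Fin.le_def.2 (show (a (⟨i, iFm⟩ : Fin m).succ : ℕ) + 1 ≤ (b ⟨i+1, by omega⟩ : ℕ) by omega))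
          hfi'
      linarith
  have h1 := claim k le_rfl
  have h2 : a ⟨k, by omega⟩ < a (Fin.last m) :=
    amono (Fin.lt_def.2 (by simp [Fin.last]; omega))
  have h3 : (b (⟨k, by omega⟩ : Fin (k+1)) : ℕ) = n - 1 := by
    rw [show (⟨k, by omega⟩ : Fin (k+1)) = Fin.last k from rfl]; exact hblast
  have h4 := Fin.le_def.1 h1
  have h5 := Fin.lt_def.1 h2
  have h6 : (a (Fin.last m) : ℕ) = n - 1 := halast
  omega
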